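/- Let X be a random variable with law μ on a measurable space 𝒳, let κ be a Markov kernel from 𝒳 to a measurable space 𝒴, and let Y be a random variable whose conditional law given X = x is κ(x). Let f : 𝒳 → [−1, 1] and g : 𝒴 → [−1, 1] be measurable, and suppose there are a probability measure ν on 𝒴 and ε ≥ 0 such that D_2(κ(x) ‖ ν) ≤ ε for μ-almost every x. Then |Cov(f(X), g(Y))| ≤ 2√(e^{ε} − 1). -/

import Mathlib

open MeasureTheory ProbabilityTheory

open Classical in
/-- The Rényi divergence of order `a` between two measures:
`D_a(P‖Q) = (1/(a−1)) · log ∫ (dP/dQ)^a dQ` if `P ≪ Q`, and `∞` otherwise. -/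
noncomputable def renyiDiv {Ω : Type*} [MeasurableSpace Ω] (a : ℝ)
    (P Q : Measure Ω) : EReal :=
  if P ≪ Q then (((a - 1)⁻¹ : ℝ) : EReal) * ENNReal.log (∫⁻ x, P.rnDeriv Q x ^ a ∂Q)
  else ⊤


lemma key_chisq {𝓨 : Type*} [MeasurableSpace 𝓨] (p q : Measure 𝓨)
    [IsProbabilityMeasure p] [IsProbabilityMeasure q] (hac : p ≪ q)
    {g : 𝓨 → ℝ} (hg : Measurable g) (hg1 : ∀ y, |g y| ≤ 1) {E : ℝ} (hE : 1 ≤ E)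
    (hL : ∫⁻ y, (p.rnDeriv q y) ^ 2 ∂q ≤ ENNReal.ofReal E) :
    |∫ y, g y ∂p - ∫ y, g y ∂q| ≤ Real.sqrt (E - 1) := by
  set r := p.rnDeriv q with hr
  set R : 𝓨 → ℝ := fun y => (r y).toReal with hRdef
  have hrm : Measurable r := Measure.measurable_rnDeriv p q
  have hfin : ∀ᵐ y ∂q, r y < ⊤ := Measure.rnDeriv_lt_top p q
  have hlint1 : ∫⁻ y, r y ∂q = 1 := by
    rw [Measure.lintegral_rnDeriv hac]; simp
  have hRm : Measurable R := hrm.ennreal_toReal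
  have hR_int : Integrable R q :=
    integrable_toReal_of_lintegral_ne_top hrm.aemeasurable (by rw [hlint1]; simp)
  have hIR : ∫ y, R y ∂q = 1 := by
    rw [hRdef, integral_toReal hrm.aemeasurable hfin, hlint1]; simp
  have hlt : ∫⁻ y, (r y) ^ 2 ∂q < ⊤ := lt_of_le_of_lt hL ENNReal.ofReal_lt_top
  have hR2_int : Integrable (fun y => R y ^ 2) q := by
    have h := integrable_toReal_of_lintegral_ne_top ((hrm.pow_const 2)).aemeasurable hlt.ne
    refine h.congr (Filter.Eventually.of_forall fun y => ?_)
    simp [hRdef, ENNReal.toReal_pow]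
  have hIR2 : ∫ y, R y ^ 2 ∂q ≤ E := by
    have h1 : ∫ y, R y ^ 2 ∂q = (∫⁻ y, (r y) ^ 2 ∂q).toReal := by
      rw [← integral_toReal ((hrm.pow_const 2)).aemeasurable
        (hfin.mono fun y hy => ENNReal.pow_lt_top hy)]
      refine integral_congr_ae (Filter.Eventually.of_forall fun y => ?_)
      simp [hRdef, ENNReal.toReal_pow]
    rw [h1]
    calc (∫⁻ y, (r y) ^ 2 ∂q).toReal ≤ (ENNReal.ofReal E).toReal :=
          ENNReal.toReal_mono ENNReal.ofReal_ne_top hL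
      _ = E := ENNReal.toReal_ofReal (by linarith)
  have hg_int_q : Integrable g q := by
    refine (integrable_const (1:ℝ)).mono' hg.aestronglyMeasurable ?_
    exact Filter.Eventually.of_forall fun y => by simpa using hg1 y
  have hRg_int : Integrable (fun y => R y * g y) q := by
    have h := hR_int.bdd_mul (c := 1) hg.aestronglyMeasurable
      (Filter.Eventually.of_forall fun y => by simpa using hg1 y)
    exact h.congr (Filter.Eventually.of_forall fun y => by ring)
  -- integral under p as integral against density
  have hp_eq : ∫ y, g y ∂p = ∫ y, R y * g y ∂q := by
    rw [← MeasureTheory.integral_rnDeriv_smul hac]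
    simp [hRdef, smul_eq_mul]
    rfl
  have hdiff : ∫ y, g y ∂p - ∫ y, g y ∂q = ∫ y, (R y - 1) * g y ∂q := by
    rw [hp_eq, ← integral_sub hRg_int hg_int_q]
    congr 1; funext y; ring
  rw [hdiff]
  -- Cauchy-Schwarz
  set u : 𝓨 → ℝ := fun y => R y - 1 with hu
  have hum : Measurable u := hRm.sub measurable_const
  have hu2_int : Integrable (fun y => u y ^ 2) q := by
    have h := (hR2_int.sub (hR_int.const_mul 2)).add (integrable_const 1)
    refine h.congr (Filter.Eventually.of_forall fun y => ?_)
    simp only [Pi.add_apply, Pi.sub_apply, hu]; ring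
  have hIu2 : ∫ y, u y ^ 2 ∂q ≤ E - 1 := by
    have heq : (fun y => u y ^ 2) = fun y => (R y ^ 2 - 2 * R y) + 1 :=
      funext fun y => by simp only [hu]; ring
    have hi : Integrable (fun y => R y ^ 2 - 2 * R y) q := hR2_int.sub (hR_int.const_mul 2)
    have h2 : ∫ y, u y ^ 2 ∂q = ∫ y, R y ^ 2 ∂q - 2 * ∫ y, R y ∂q + 1 := by
      rw [heq, integral_add hi (integrable_const 1),
        integral_sub hR2_int (hR_int.const_mul 2), integral_const_mul]
      simp
    rw [h2, hIR]; linarith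
  have hpq : Real.HolderConjugate 2 2 := Real.HolderConjugate.two_two
  have hof2 : ENNReal.ofReal (2:ℝ) = 2 := by norm_num
  have hMu : MemLp u (ENNReal.ofReal 2) q := by
    rw [hof2]; exact (memLp_two_iff_integrable_sq hum.aestronglyMeasurable).mpr hu2_int
  have hMg : MemLp g (ENNReal.ofReal 2) q := by
    rw [hof2]
    exact MemLp.of_bound hg.aestronglyMeasurable 1
      (Filter.Eventually.of_forall fun y => by simpa using hg1 y)
  have hCS := integral_mul_norm_le_Lp_mul_Lq hpq hMu hMg
  have habs : |∫ y, u y * g y ∂q| ≤ ∫ y, ‖u y‖ * ‖g y‖ ∂q := by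
    calc |∫ y, u y * g y ∂q| ≤ ∫ y, ‖u y * g y‖ ∂q := by
          rw [← Real.norm_eq_abs]; exact norm_integral_le_integral_norm _
      _ = ∫ y, ‖u y‖ * ‖g y‖ ∂q := by simp [norm_mul]
  have h1 : (∫ y, ‖u y‖ ^ (2:ℝ) ∂q) ^ (1/(2:ℝ)) ≤ Real.sqrt (E - 1) := by
    have heq : ∫ y, ‖u y‖ ^ (2:ℝ) ∂q = ∫ y, u y ^ 2 ∂q := by
      refine integral_congr_ae (Filter.Eventually.of_forall fun y => ?_)
      simp [Real.rpow_two, Real.norm_eq_abs, sq_abs]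
    rw [heq, Real.sqrt_eq_rpow]
    exact Real.rpow_le_rpow (integral_nonneg fun y => sq_nonneg _) hIu2 (by norm_num)
  have h2 : (∫ y, ‖g y‖ ^ (2:ℝ) ∂q) ^ (1/(2:ℝ)) ≤ 1 := by
    have hle : ∫ y, ‖g y‖ ^ (2:ℝ) ∂q ≤ 1 := by
      have : ∫ y, (1:ℝ) ∂q = 1 := by simp
      rw [← this]
      refine integral_mono ?_ (integrable_const 1) fun y => ?_
      · refine (hg_int_q.bdd_mul (c := 1) hg.aestronglyMeasurable
          (Filter.Eventually.of_forall fun y => by simpa using hg1 y)).congr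
          (Filter.Eventually.of_forall fun y => ?_)
        simp [Real.rpow_two, Real.norm_eq_abs, sq_abs, sq]
      · rw [Real.rpow_two, Real.norm_eq_abs, sq_abs]
        have := hg1 y
        nlinarith [abs_nonneg (g y), neg_abs_le (g y), le_abs_self (g y)]
    calc (∫ y, ‖g y‖ ^ (2:ℝ) ∂q) ^ (1/(2:ℝ)) ≤ (1:ℝ) ^ (1/(2:ℝ)) :=
          Real.rpow_le_rpow (integral_nonneg fun y => Real.rpow_nonneg (norm_nonneg _) _)
            hle (by norm_num)
      _ = 1 := Real.one_rpow _
  calc |∫ y, u y * g y ∂q| ≤ ∫ y, ‖u y‖ * ‖g y‖ ∂q := habs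
    _ ≤ (∫ y, ‖u y‖ ^ (2:ℝ) ∂q) ^ (1/(2:ℝ)) * (∫ y, ‖g y‖ ^ (2:ℝ) ∂q) ^ (1/(2:ℝ)) := hCS
    _ ≤ Real.sqrt (E - 1) * 1 := by
        refine mul_le_mul h1 h2 (Real.rpow_nonneg (integral_nonneg fun y =>
          Real.rpow_nonneg (norm_nonneg _) _) _) (Real.sqrt_nonneg _)
    _ = Real.sqrt (E - 1) := mul_one _

lemma integrable_of_bdd {α : Type*} [MeasurableSpace α] (μ : Measure α) [IsFiniteMeasure μ]
    {h : α → ℝ} {C : ℝ} (hm : AEStronglyMeasurable h μ) (hb : ∀ x, |h x| ≤ C) :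
    Integrable h μ :=
  (integrable_const C).mono' hm (Filter.Eventually.of_forall fun x => by
    simpa [Real.norm_eq_abs] using hb x)


/-- **Near pairwise independence from conditional closeness in Rényi divergence.**
Let `X` be a random variable with law `μ`, let `κ` be a Markov kernel, and let `Y` have
conditional law `κ(x)` given `X = x` (i.e. the law of `(X, Y)` is `μ ⊗ κ`). Let
`f : 𝒳 → [−1,1]` and `g : 𝒴 → [−1,1]` be measurable, and suppose there are a probability
measure `ν` and `ε ≥ 0` such that `D₂(κ(x)‖ν) ≤ ε` for `μ`-almost every `x`. Then
`|Cov(f(X), g(Y))| ≤ 2√(e^ε − 1)`. -/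
theorem abs_cov_le_of_renyiDiv_le
    {Ω 𝓧 𝓨 : Type*} [MeasurableSpace Ω] [MeasurableSpace 𝓧] [MeasurableSpace 𝓨]
    (P : Measure Ω) [IsProbabilityMeasure P]
    (X : Ω → 𝓧) (hX : Measurable X) (Y : Ω → 𝓨) (hY : Measurable Y)
    (μ : Measure 𝓧) (hμ : μ = P.map X)
    (κ : Kernel 𝓧 𝓨) [IsMarkovKernel κ]
    (hjoint : P.map (fun ω => (X ω, Y ω)) = μ ⊗ₘ κ)
    (f : 𝓧 → ℝ) (hf : Measurable f) (hf1 : ∀ x, f x ∈ Set.Icc (-1 : ℝ) 1)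
    (g : 𝓨 → ℝ) (hg : Measurable g) (hg1 : ∀ y, g y ∈ Set.Icc (-1 : ℝ) 1)
    (ν : Measure 𝓨) [IsProbabilityMeasure ν]
    (ε : ℝ) (hε : 0 ≤ ε)
    (hdiv : ∀ᵐ x ∂μ, renyiDiv 2 (κ x) ν ≤ (ε : EReal)) :
    |∫ ω, (f (X ω) - ∫ ω', f (X ω') ∂P) * (g (Y ω) - ∫ ω', g (Y ω') ∂P) ∂P|
      ≤ 2 * Real.sqrt (Real.exp ε - 1) := by
  have hfa : ∀ x, |f x| ≤ 1 := fun x => abs_le.mpr ⟨(hf1 x).1, (hf1 x).2⟩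
  have hga : ∀ y, |g y| ≤ 1 := fun y => abs_le.mpr ⟨(hg1 y).1, (hg1 y).2⟩
  subst hμ
  haveI hμprob : IsProbabilityMeasure (P.map X) := Measure.isProbabilityMeasure_map hX.aemeasurable
  set E := Real.exp ε with hEdef
  have hE : 1 ≤ E := Real.one_le_exp hε
  set s := Real.sqrt (E - 1) with hsdef
  have hs0 : 0 ≤ s := Real.sqrt_nonneg _
  set c := ∫ y, g y ∂ν with hc
  have hc1 : |c| ≤ 1 := by
    rw [← Real.norm_eq_abs]
    calc ‖∫ y, g y ∂ν‖ ≤ 1 * (ν Set.univ).toReal :=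
          norm_integral_le_of_norm_le_const
            (Filter.Eventually.of_forall fun y => by simpa [Real.norm_eq_abs] using hga y)
      _ = 1 := by simp
  -- a.e. pointwise bound from the divergence assumption
  have hkey : ∀ᵐ x ∂(P.map X), |∫ y, g y ∂(κ x) - c| ≤ s := by
    filter_upwards [hdiv] with x hx
    by_cases hac : κ x ≪ ν
    · rw [renyiDiv, if_pos hac] at hx
      have h1 : (((2 - 1 : ℝ)⁻¹ : ℝ) : EReal) = 1 := by norm_num
      rw [h1, one_mul] at hx
      have hL : ∫⁻ y, ((κ x).rnDeriv ν y) ^ 2 ∂ν ≤ ENNReal.ofReal E := by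
        have hlog : ENNReal.log (ENNReal.ofReal E) = (ε : EReal) := by
          rw [hEdef, ENNReal.log_ofReal_of_pos (Real.exp_pos ε), Real.log_exp]
        rw [← ENNReal.log_le_log_iff, hlog]
        have heq : ∫⁻ y, ((κ x).rnDeriv ν y) ^ (2:ℝ) ∂ν
            = ∫⁻ y, ((κ x).rnDeriv ν y) ^ 2 ∂ν := by
          simp [ENNReal.rpow_two]
        rw [← heq]; exact hx
      exact key_chisq (κ x) ν hac hg hga hE hL
    · rw [renyiDiv, if_neg hac] at hx
      exact absurd (top_le_iff.mp hx) (EReal.coe_ne_top ε)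
  set m := ∫ ω', f (X ω') ∂P with hm
  set mg := ∫ ω', g (Y ω') ∂P with hmg
  have hfX_int : Integrable (fun ω => f (X ω)) P :=
    integrable_of_bdd P (hf.comp hX).aestronglyMeasurable (fun ω => hfa (X ω))
  have hm1 : |m| ≤ 1 := by
    rw [hm, ← Real.norm_eq_abs]
    calc ‖∫ ω', f (X ω') ∂P‖ ≤ 1 * (P Set.univ).toReal :=
          norm_integral_le_of_norm_le_const
            (Filter.Eventually.of_forall fun ω => by simpa [Real.norm_eq_abs] using hfa (X ω))
      _ = 1 := by simp
  have hfm2 : ∀ x, |f x - m| ≤ 2 := fun x => by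
    have := hfa x; have := hm1
    calc |f x - m| ≤ |f x| + |m| := abs_sub _ _
      _ ≤ 2 := by linarith
  have hgc2 : ∀ y, |g y - c| ≤ 2 := fun y => by
    have := hga y
    calc |g y - c| ≤ |g y| + |c| := abs_sub _ _
      _ ≤ 2 := by linarith
  -- decomposition of the covariance
  have int1 : Integrable (fun ω => (f (X ω) - m) * (g (Y ω) - c)) P := by
    refine integrable_of_bdd P ?_ (C := 4) fun ω => ?_
    · exact (((hf.comp hX).sub measurable_const).mul
        ((hg.comp hY).sub measurable_const)).aestronglyMeasurable
    · rw [abs_mul]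
      calc |f (X ω) - m| * |g (Y ω) - c| ≤ 2 * 2 :=
            mul_le_mul (hfm2 _) (hgc2 _) (abs_nonneg _) (by norm_num)
        _ = 4 := by norm_num
  have int2 : Integrable (fun ω => (c - mg) * (f (X ω) - m)) P :=
    (hfX_int.sub (integrable_const m)).const_mul _
  have hzero : ∫ ω, (f (X ω) - m) ∂P = 0 := by
    rw [integral_sub hfX_int (integrable_const m)]
    simp [hm]
  have hsplit : ∫ ω, (f (X ω) - m) * (g (Y ω) - mg) ∂P
      = ∫ ω, (f (X ω) - m) * (g (Y ω) - c) ∂P := by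
    have : (fun ω => (f (X ω) - m) * (g (Y ω) - mg))
        = fun ω => (f (X ω) - m) * (g (Y ω) - c) + (c - mg) * (f (X ω) - m) :=
      funext fun ω => by ring
    rw [this, integral_add int1 int2, integral_const_mul, hzero]
    ring
  rw [hsplit]
  -- transfer to the product measure and disintegrate
  set F : 𝓧 × 𝓨 → ℝ := fun z => (f z.1 - m) * (g z.2 - c) with hF
  have hFm : Measurable F :=
    ((hf.comp measurable_fst).sub measurable_const).mul
      ((hg.comp measurable_snd).sub measurable_const)
  have hmapeq : ∫ ω, (f (X ω) - m) * (g (Y ω) - c) ∂P = ∫ z, F z ∂(P.map X ⊗ₘ κ) := by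
    have h := integral_map (μ := P) (φ := fun ω => (X ω, Y ω)) (f := F)
      (hX.prodMk hY).aemeasurable hFm.aestronglyMeasurable
    rw [hjoint] at h
    exact h.symm
  have hFint : Integrable F (P.map X ⊗ₘ κ) := by
    refine integrable_of_bdd _ hFm.aestronglyMeasurable (C := 4) fun z => ?_
    rw [hF, abs_mul]
    calc |f z.1 - m| * |g z.2 - c| ≤ 2 * 2 :=
          mul_le_mul (hfm2 _) (hgc2 _) (abs_nonneg _) (by norm_num)
      _ = 4 := by norm_num
  rw [hmapeq, Measure.integral_compProd hFint]
  -- bound the outer integral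
  have hg_int : ∀ x, Integrable g (κ x) := fun x =>
    integrable_of_bdd _ hg.aestronglyMeasurable hga
  have hbound : ∀ᵐ x ∂(P.map X), ‖∫ y, F (x, y) ∂κ x‖ ≤ 2 * s := by
    filter_upwards [hkey] with x hx
    have hinner : ∫ y, F (x, y) ∂κ x = (f x - m) * (∫ y, g y ∂κ x - c) := by
      rw [hF]
      simp only
      rw [integral_const_mul, integral_sub (hg_int x) (integrable_const c)]
      simp
    rw [hinner, Real.norm_eq_abs, abs_mul]
    exact mul_le_mul (hfm2 x) hx (abs_nonneg _) (by norm_num)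
  calc |∫ x, ∫ y, F (x, y) ∂κ x ∂(P.map X)|
      ≤ ∫ x, 2 * s ∂(P.map X) := by
        rw [← Real.norm_eq_abs]
        exact norm_integral_le_of_norm_le (integrable_const (2 * s)) hbound
    _ = 2 * s := by simp
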